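/- Let G be a centerless group with automorphism tower ⟨G^α⟩, and let β ≤ γ be ordinals. Then the β-th stage of the normalizer tower of G inside the group G^γ equals G^β: nor_{G^γ}^β(G) = G^β. In other words, up to γ the automorphism tower of G coincides with the normalizer tower of G in G^γ. -/

import Mathlib

universe u

/-- The automorphism tower of a centerless group `G`: an ordinal-indexed increasing
continuous chain of groups, starting at `G`, where each successor stage is (identified
with) the automorphism group of the previous stage via the conjugation embedding. -/
structure AutTower (G : Type u) [Group G] where
  /-- the `o`-th stage `G^o` of the tower -/
  Stage : Ordinal.{u} → GrpCat.{u}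
  /-- the inclusion maps of the tower -/
  map : ∀ ⦃o₁ o₂ : Ordinal.{u}⦄, o₁ ≤ o₂ → (↥(Stage o₁) →* ↥(Stage o₂))
  map_id : ∀ (o : Ordinal.{u}) (x : ↥(Stage o)), map le_rfl x = x
  map_comp : ∀ ⦃o₁ o₂ o₃ : Ordinal.{u}⦄ (h₁ : o₁ ≤ o₂) (h₂ : o₂ ≤ o₃) (x : ↥(Stage o₁)),
      map h₂ (map h₁ x) = map (h₁.trans h₂) x
  map_injective : ∀ ⦃o₁ o₂ : Ordinal.{u}⦄ (h : o₁ ≤ o₂), Function.Injective (map h)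
  /-- the identification of `G` with the `0`-th stage -/
  emb0 : G ≃* ↥(Stage 0)
  /-- the identification of the `(o+1)`-st stage with `Aut(G^o)` -/
  succIso : ∀ o : Ordinal.{u}, ↥(Stage (o + 1)) ≃* MulAut ↥(Stage o)
  /-- under the above identification, the inclusion `G^o ≤ G^{o+1}` is `g ↦` conjugation by `g` -/
  succIso_map : ∀ (o : Ordinal.{u}) (x : ↥(Stage o)),
      succIso o (map (le_self_add : o ≤ o + 1) x) = MulAut.conj x
  /-- at limit stages the tower is continuous: `G^δ = ⋃_{α<δ} G^α` -/
  limit_covers : ∀ (o : Ordinal.{u}), Order.IsSuccLimit o → ∀ x : ↥(Stage o),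
      ∃ (o' : Ordinal.{u}) (h : o' < o), x ∈ Set.range (map h.le)

namespace AutTower

variable {G : Type u} [Group G]

/-- the embedding of `G` into the `o`-th stage of its automorphism tower -/
def embed (T : AutTower G) (o : Ordinal.{u}) : G →* ↥(T.Stage o) :=
  (T.map (zero_le : 0 ≤ o)).comp T.emb0.toMonoidHom

/-- `G^{o+1} = G^o`, i.e. the inclusion of stage `o` into stage `o+1` is onto -/
def StabilizesAt (T : AutTower G) (o : Ordinal.{u}) : Prop :=
  Function.Surjective (T.map (le_self_add : o ≤ o + 1))

end AutTower

/-- The normalizer tower of a subgroup `H` of `G`: `nor_G^0(H) = H`,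
`nor_G^{α+1}(H) = N_G(nor_G^α(H))`, and unions (suprema of the increasing chain)
at limit ordinals. -/
noncomputable def norTower {G : Type u} [Group G] (H : Subgroup G) (o : Ordinal.{u}) :
    Subgroup G :=
  Ordinal.limitRecOn o H (fun _ ih => Subgroup.normalizer (ih : Set G))
    (fun o _ ih => ⨆ (o' : Ordinal.{u}) (h : o' < o), ih o' h)

/- ### Auxiliary lemmas -/

lemma norTower_zero {K : Type u} [Group K] (H : Subgroup K) : norTower H 0 = H := by
  unfold norTower; exact Ordinal.limitRecOn_zero _ _ _

lemma norTower_succ {K : Type u} [Group K] (H : Subgroup K) (o : Ordinal.{u}) :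
    norTower H (o + 1) = Subgroup.normalizer (norTower H o : Set K) := by
  unfold norTower; rw [Ordinal.add_one_eq_succ, Ordinal.limitRecOn_succ]

lemma norTower_limit {K : Type u} [Group K] (H : Subgroup K) (o : Ordinal.{u})
    (ho : Order.IsSuccLimit o) :
    norTower H o = ⨆ (o' : Ordinal.{u}) (_ : o' < o), norTower H o' := by
  unfold norTower; rw [Ordinal.limitRecOn_limit _ _ _ _ ho]

lemma eq_of_conj_eq_aux {H : Type*} [Group H] {u x c : H}
    (e : u * c * u⁻¹ = x * c * x⁻¹) : c * (u⁻¹ * x) = (u⁻¹ * x) * c := by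
  calc c * (u⁻¹ * x) = u⁻¹ * (u * c * u⁻¹) * x := by group
    _ = u⁻¹ * (x * c * x⁻¹) * x := by rw [e]
    _ = (u⁻¹ * x) * c := by group

namespace AutTower

variable {G : Type u} [Group G] (T : AutTower G)

lemma conj_map (o : Ordinal.{u}) (y : ↥(T.Stage (o + 1))) (g : ↥(T.Stage o)) :
    y * T.map ((le_self_add : o ≤ o + 1)) g * y⁻¹ =
      T.map ((le_self_add : o ≤ o + 1)) ((T.succIso o y) g) := by
  apply (T.succIso o).injective
  rw [T.succIso_map, map_mul, map_mul, map_inv, T.succIso_map]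
  ext z
  simp only [MulAut.mul_apply, MulAut.conj_apply, MulAut.inv_def, map_mul, map_inv,
    MulEquiv.apply_symm_apply]

lemma conj_map' {α γ : Ordinal.{u}} (h1 : α + 1 ≤ γ) (y : ↥(T.Stage (α + 1)))
    (g : ↥(T.Stage α)) :
    T.map h1 y * T.map (((le_self_add : α ≤ α + 1)).trans h1) g * (T.map h1 y)⁻¹ =
      T.map (((le_self_add : α ≤ α + 1)).trans h1) ((T.succIso α y) g) := by
  rw [← T.map_comp ((le_self_add : α ≤ α + 1)) h1 g,
    ← T.map_comp ((le_self_add : α ≤ α + 1)) h1 ((T.succIso α y) g),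
    ← map_inv, ← map_mul, ← map_mul, T.conj_map]

/-- Rigidity: an automorphism of stage `δ` which fixes the image of stage `α`
pointwise fixes the image of every stage `β` with `α ≤ β ≤ δ` pointwise,
provided centralizers of stages in stage `δ` are trivial. -/
lemma rigid (δ : Ordinal.{u})
    (Hcent : ∀ (β : Ordinal.{u}) (h : β ≤ δ) (x : ↥(T.Stage δ)),
      (∀ g : ↥(T.Stage β), Commute (T.map h g) x) → x = 1)
    (φ : MulAut ↥(T.Stage δ)) (α : Ordinal.{u}) (hα : α ≤ δ)
    (hfix : ∀ g : ↥(T.Stage α), φ (T.map hα g) = T.map hα g) :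
    ∀ (β : Ordinal.{u}) (h1 : α ≤ β) (h2 : β ≤ δ) (g : ↥(T.Stage β)),
      φ (T.map h2 g) = T.map h2 g := by
  intro β
  induction β using Ordinal.induction with
  | _ β IH =>
  intro h1 h2 g
  rcases eq_or_lt_of_le h1 with rfl | hlt
  · exact hfix g
  rcases Ordinal.zero_or_succ_or_isSuccLimit β with rfl | ⟨s, rfl⟩ | hlim
  · exact absurd hlt (by simp)
  · -- successor case
    revert h2 g hlt
    rw [← Ordinal.add_one_eq_succ]
    intro h2 g hlt
    have hs : s < s + 1 := by rw [Ordinal.add_one_eq_succ]; exact Order.lt_succ s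
    have hαs : α ≤ s := by
      rw [Ordinal.add_one_eq_succ, Order.lt_succ_iff] at hlt; exact hlt
    have hsδ : s ≤ δ := hs.le.trans h2
    set a : ↥(T.Stage δ) := T.map h2 g with ha
    set b : ↥(T.Stage δ) := φ a with hb
    have hw : a⁻¹ * b = 1 := by
      apply Hcent s hsδ
      intro g'
      set c : ↥(T.Stage δ) := T.map hsδ g' with hc
      have e2 : φ c = c := IH s hs hαs hsδ g'
      have e1 : a * c * a⁻¹ = T.map hsδ ((T.succIso s g) g') := by
        rw [ha, hc, ← T.map_comp ((le_self_add : s ≤ s + 1)) h2 g', ← map_inv, ← map_mul,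
          ← map_mul, T.conj_map, T.map_comp]
      have e3 : φ (T.map hsδ ((T.succIso s g) g')) = T.map hsδ ((T.succIso s g) g') :=
        IH s hs hαs hsδ _
      have e4 : b * c * b⁻¹ = a * c * a⁻¹ := by
        calc b * c * b⁻¹ = φ (a * c * a⁻¹) := by
              rw [map_mul, map_mul, map_inv, e2, ← hb]
          _ = a * c * a⁻¹ := by rw [e1]; exact e3
      exact eq_of_conj_eq_aux e4.symm
    rw [inv_mul_eq_one] at hw
    exact hw.symm
  · -- limit case
    obtain ⟨o', ho', g', hg'⟩ := T.limit_covers β hlim g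
    have hm : max α o' < β := max_lt hlt ho'
    have hgeq : T.map h2 g = T.map (hm.le.trans h2) (T.map (le_max_right α o') g') := by
      rw [T.map_comp, ← hg', T.map_comp]
    rw [hgeq]
    exact IH (max α o') hm (le_max_left α o') (hm.le.trans h2) _

/-- Centralizers of (the images of) stages are trivial. -/
lemma cent (hG : Subgroup.center G = ⊥) :
    ∀ (γ α : Ordinal.{u}) (h : α ≤ γ) (x : ↥(T.Stage γ)),
      (∀ g : ↥(T.Stage α), Commute (T.map h g) x) → x = 1 := by
  intro γ
  induction γ using Ordinal.induction with
  | _ γ IH =>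
  intro α h x hx
  rcases Ordinal.zero_or_succ_or_isSuccLimit γ with rfl | ⟨δ, rfl⟩ | hlim
  · -- γ = 0
    have hα0 : α = 0 := nonpos_iff_eq_zero.mp h
    subst hα0
    have hz : T.emb0.symm x ∈ Subgroup.center G := by
      rw [Subgroup.mem_center_iff]
      intro y
      apply T.emb0.injective
      rw [map_mul, map_mul, MulEquiv.apply_symm_apply]
      have hc : T.map h (T.emb0 y) * x = x * T.map h (T.emb0 y) := hx (T.emb0 y)
      have hid : T.map h (T.emb0 y) = T.emb0 y := T.map_id 0 (T.emb0 y)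
      rw [hid] at hc
      exact hc
    rw [hG, Subgroup.mem_bot] at hz
    calc x = T.emb0 (T.emb0.symm x) := (MulEquiv.apply_symm_apply _ _).symm
      _ = 1 := by rw [hz, map_one]
  · -- γ = δ + 1
    revert h x
    rw [← Ordinal.add_one_eq_succ]
    intro h x hx
    have hδ : δ < δ + 1 := by rw [Ordinal.add_one_eq_succ]; exact Order.lt_succ δ
    have key : ∀ (α' : Ordinal.{u}) (hα' : α' ≤ δ),
        (∀ g : ↥(T.Stage α'), Commute (T.map (hα'.trans hδ.le) g) x) → x = 1 := by
      intro α' hα' hx'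
      have hfix : ∀ g : ↥(T.Stage α'),
          (T.succIso δ x) (T.map hα' g) = T.map hα' g := by
        intro g
        have hcm : Commute (T.map ((le_self_add : δ ≤ δ + 1)) (T.map hα' g)) x := by
          rw [T.map_comp]; exact hx' g
        have e2 : x * T.map ((le_self_add : δ ≤ δ + 1)) (T.map hα' g) * x⁻¹ =
            T.map ((le_self_add : δ ≤ δ + 1)) (T.map hα' g) := by
          rw [← hcm.eq, mul_inv_cancel_right]
        have e1 := T.conj_map δ x (T.map hα' g)
        exact T.map_injective ((le_self_add : δ ≤ δ + 1)) (e1.symm.trans e2)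
      have hφ : ∀ z : ↥(T.Stage δ), (T.succIso δ x) z = z := by
        intro z
        have hr := T.rigid δ (fun β hβ => IH δ hδ β hβ) (T.succIso δ x) α' hα' hfix
          δ hα' le_rfl z
        have hid : T.map (le_rfl : δ ≤ δ) z = z := T.map_id δ z
        rw [hid] at hr
        exact hr
      apply (T.succIso δ).injective
      rw [map_one]
      ext z
      rw [MulAut.one_apply]
      exact hφ z
    rcases lt_or_eq_of_le h with hlt | rfl
    · have hαδ : α ≤ δ := by
        rw [Ordinal.add_one_eq_succ, Order.lt_succ_iff] at hlt; exact hlt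
      exact key α hαδ (fun g => hx g)
    · apply key δ le_rfl
      intro g
      have hc := hx (T.map ((le_self_add : δ ≤ δ + 1)) g)
      have hid : T.map h (T.map ((le_self_add : δ ≤ δ + 1)) g) =
          T.map ((le_self_add : δ ≤ δ + 1)) g := T.map_id _ _
      rw [hid] at hc
      exact hc
  · -- γ limit
    obtain ⟨γ', hγ', z, hz⟩ := T.limit_covers γ hlim x
    rcases lt_or_eq_of_le h with hαγ | rfl
    · have hm : max α γ' < γ := max_lt hαγ hγ'
      have hxw : x = T.map hm.le (T.map (le_max_right α γ') z) := by
        rw [T.map_comp, ← hz]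
      have hw : T.map (le_max_right α γ') z = 1 := by
        apply IH _ hm α (le_max_left α γ')
        intro g
        have hc : T.map h g * x = x * T.map h g := hx g
        show T.map (le_max_left α γ') g * T.map (le_max_right α γ') z =
          T.map (le_max_right α γ') z * T.map (le_max_left α γ') g
        apply T.map_injective hm.le
        rw [map_mul, map_mul, T.map_comp, ← hxw]
        exact hc
      rw [hxw, hw, map_one]
    · -- α = γ
      have hw : z = 1 := by
        apply IH γ' hγ' γ' le_rfl
        intro g
        have hc : T.map h (T.map hγ'.le g) * x = x * T.map h (T.map hγ'.le g) :=
          hx (T.map hγ'.le g)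
        have hid : T.map h (T.map hγ'.le g) = T.map hγ'.le g := T.map_id _ _
        rw [hid] at hc
        have hid2 : T.map (le_rfl : γ' ≤ γ') g = g := T.map_id _ _
        show T.map (le_rfl : γ' ≤ γ') g * z = z * T.map (le_rfl : γ' ≤ γ') g
        rw [hid2]
        apply T.map_injective hγ'.le
        rw [map_mul, map_mul, hz]
        exact hc
      rw [← hz, hw, map_one]

/-- The normalizer of (the image of) stage `α` in stage `γ` is (the image of)
stage `α + 1`. -/
lemma normalizer_range (hG : Subgroup.center G = ⊥) {α γ : Ordinal.{u}} (h1 : α + 1 ≤ γ) :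
    Subgroup.normalizer ((T.map (((le_self_add : α ≤ α + 1)).trans h1)).range : Set ↥(T.Stage γ)) =
      (T.map h1).range := by
  have h2 : α ≤ γ := ((le_self_add : α ≤ α + 1)).trans h1
  apply le_antisymm
  · intro x hx
    rw [Subgroup.mem_normalizer_iff] at hx
    have hfwd : ∀ g : ↥(T.Stage α), ∃ g', T.map h2 g' = x * T.map h2 g * x⁻¹ := by
      intro g
      exact MonoidHom.mem_range.mp ((hx (T.map h2 g)).mp (MonoidHom.mem_range.mpr ⟨g, rfl⟩))
    have hbwd : ∀ g : ↥(T.Stage α), ∃ g', T.map h2 g' = x⁻¹ * T.map h2 g * x := by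
      intro g
      refine MonoidHom.mem_range.mp ((hx (x⁻¹ * T.map h2 g * x)).mpr ?_)
      have e : x * (x⁻¹ * T.map h2 g * x) * x⁻¹ = T.map h2 g := by group
      rw [e]
      exact MonoidHom.mem_range.mpr ⟨g, rfl⟩
    let φ : ↥(T.Stage α) ≃* ↥(T.Stage α) :=
      { toFun := fun g => (hfwd g).choose
        invFun := fun g => (hbwd g).choose
        left_inv := by
          intro g
          apply T.map_injective h2
          rw [(hbwd _).choose_spec, (hfwd g).choose_spec]
          group
        right_inv := by
          intro g
          apply T.map_injective h2
          rw [(hfwd _).choose_spec, (hbwd g).choose_spec]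
          group
        map_mul' := by
          intro g g'
          apply T.map_injective h2
          show T.map h2 ((hfwd (g * g')).choose) =
            T.map h2 ((hfwd g).choose * (hfwd g').choose)
          calc T.map h2 ((hfwd (g * g')).choose)
              = x * T.map h2 (g * g') * x⁻¹ := (hfwd _).choose_spec
            _ = (x * T.map h2 g * x⁻¹) * (x * T.map h2 g' * x⁻¹) := by
                rw [map_mul]; group
            _ = T.map h2 ((hfwd g).choose) * T.map h2 ((hfwd g').choose) := by
                rw [(hfwd g).choose_spec, (hfwd g').choose_spec]
            _ = T.map h2 ((hfwd g).choose * (hfwd g').choose) := (map_mul _ _ _).symm }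
    have hφ : ∀ g, T.map h2 (φ g) = x * T.map h2 g * x⁻¹ := fun g => (hfwd g).choose_spec
    have hyg : ∀ g, T.map h1 ((T.succIso α).symm φ) * T.map h2 g *
        (T.map h1 ((T.succIso α).symm φ))⁻¹ = T.map h2 (φ g) := by
      intro g
      have e := T.conj_map' h1 ((T.succIso α).symm φ) g
      rwa [MulEquiv.apply_symm_apply] at e
    have hw : (T.map h1 ((T.succIso α).symm φ))⁻¹ * x = 1 := by
      apply T.cent hG γ α h2
      intro g
      exact eq_of_conj_eq_aux ((hyg g).trans (hφ g))
    rw [inv_mul_eq_one] at hw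
    exact MonoidHom.mem_range.mpr ⟨_, hw⟩
  · intro x hx
    obtain ⟨y, rfl⟩ := MonoidHom.mem_range.mp hx
    rw [Subgroup.mem_normalizer_iff]
    intro z
    constructor
    · intro hz
      obtain ⟨g, rfl⟩ := MonoidHom.mem_range.mp hz
      exact MonoidHom.mem_range.mpr ⟨(T.succIso α y) g, (T.conj_map' h1 y g).symm⟩
    · intro hz
      obtain ⟨g, hg⟩ := MonoidHom.mem_range.mp hz
      have e := T.conj_map' h1 y⁻¹ g
      rw [map_inv, inv_inv] at e
      refine MonoidHom.mem_range.mpr ⟨(T.succIso α y⁻¹) g, ?_⟩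
      rw [← e, hg]
      group

end AutTower

/-- If `G` is centerless and `β ≤ γ`, then the `β`-th stage of the normalizer tower
of `G` inside `G^γ` equals `G^β`: `nor_{G^γ}^β(G) = G^β`; i.e. up to `γ` the
automorphism tower of `G` coincides with the normalizer tower of `G` in `G^γ`
(stages being regarded as subgroups of `G^γ` via the tower embeddings). -/
theorem norTower_eq_stage {G : Type u} [Group G]
    (hG : Subgroup.center G = ⊥) (T : AutTower G) (β γ : Ordinal.{u}) (h : β ≤ γ) :
    norTower ((T.embed γ).range) β = (T.map h).range := by
  revert h
  induction β using Ordinal.induction with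
  | _ β IH =>
  intro h
  rcases Ordinal.zero_or_succ_or_isSuccLimit β with rfl | ⟨b, rfl⟩ | hlim
  · -- β = 0
    rw [norTower_zero]
    ext z
    rw [MonoidHom.mem_range, MonoidHom.mem_range]
    constructor
    · rintro ⟨g, rfl⟩
      exact ⟨T.emb0 g, rfl⟩
    · rintro ⟨g, rfl⟩
      exact ⟨T.emb0.symm g, by simp [AutTower.embed]⟩
  · -- successor
    revert h
    rw [← Ordinal.add_one_eq_succ]
    intro h
    have hblt : b < b + 1 := by rw [Ordinal.add_one_eq_succ]; exact Order.lt_succ b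
    have hb : b ≤ γ := hblt.le.trans h
    rw [norTower_succ, IH b hblt hb]
    exact T.normalizer_range hG h
  · -- limit
    rw [norTower_limit _ β hlim]
    apply le_antisymm
    · apply iSup_le
      intro b
      apply iSup_le
      intro hb
      rw [IH b hb (hb.le.trans h)]
      intro x hx
      obtain ⟨g, rfl⟩ := MonoidHom.mem_range.mp hx
      exact MonoidHom.mem_range.mpr ⟨T.map hb.le g, by rw [T.map_comp]⟩
    · intro x hx
      obtain ⟨g, rfl⟩ := MonoidHom.mem_range.mp hx
      obtain ⟨b, hb, g', hg'⟩ := T.limit_covers β hlim g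
      have hmem : T.map (hb.le.trans h) g' ∈ norTower ((T.embed γ).range) b := by
        rw [IH b hb (hb.le.trans h)]
        exact MonoidHom.mem_range.mpr ⟨g', rfl⟩
      have hgeq : T.map h g = T.map (hb.le.trans h) g' := by
        rw [← hg', T.map_comp]
      rw [hgeq]
      exact le_iSup₂ (f := fun (o' : Ordinal.{u}) (_ : o' < β) =>
        norTower ((T.embed γ).range) o') b hb hmem
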